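/- Let ā be a random variable with E(ā^{2n}) = C_n (Catalan number) and E(ā^{2n+1}) = 0, and let t be an independent random variable uniform on a finite multiset {t_σ : σ ∈ G} of real numbers. Then ā₂ = t·(ā² − 2 + t) satisfies E(ā₂^n) = (1/|G|)·Σ_{i=0}^n binom(n,i)·C_i·Σ_{σ∈G} t_σ^n (t_σ − 2)^{n−i}. -/

import Mathlib

open MeasureTheory ProbabilityTheory Finset

/-- If `X` has even moments the Catalan numbers and vanishing odd
moments, and `T` is an independent random variable uniform on the finite multiset
`{tval σ : σ ∈ G}`, then `ā₂ = T·(X² − 2 + T)` satisfies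
`E(ā₂^n) = (1/|G|)·∑_{i=0}^n binom(n,i)·C_i·∑_σ tval σ^n (tval σ − 2)^{n−i}`. -/
theorem moments_of_a2 {Ω : Type*} [MeasurableSpace Ω] (μ : Measure Ω)
    [IsProbabilityMeasure μ] {G : Type*} [Fintype G] (tval : G → ℝ)
    (X T : Ω → ℝ) (hX : Measurable X) (hT : Measurable T)
    (hindep : IndepFun X T μ)
    (hXeven : ∀ n : ℕ, ∫ ω, (X ω) ^ (2 * n) ∂μ = (catalan n : ℝ))
    (hXodd : ∀ n : ℕ, ∫ ω, (X ω) ^ (2 * n + 1) ∂μ = 0)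
    (hTdist : ∀ f : ℝ → ℝ,
      ∫ ω, f (T ω) ∂μ = (∑ σ : G, f (tval σ)) / (Fintype.card G : ℝ)) :
    ∀ n : ℕ, ∫ ω, (T ω * ((X ω) ^ 2 - 2 + T ω)) ^ n ∂μ
      = (∑ i ∈ Finset.range (n + 1), (n.choose i : ℝ) * (catalan i : ℝ) *
          ∑ σ : G, (tval σ) ^ n * (tval σ - 2) ^ (n - i)) / (Fintype.card G : ℝ) := by
  intro n
  -- X has integrable even powers
  have hXint : ∀ i : ℕ, Integrable (fun ω => X ω ^ (2 * i)) μ := by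
    intro i
    by_contra h
    have h0 := integral_undef h
    rw [hXeven i] at h0
    have hc : 0 < catalan i := by
      have := Nat.centralBinom_pos i
      rw [← succ_mul_catalan_eq_centralBinom i] at this
      rcases Nat.eq_zero_or_pos (catalan i) with h | h
      · simp [h] at this
      · exact h
    exact absurd h0 (by exact_mod_cast hc.ne')
  -- T lands a.e. in the range of tval
  have hTmem : ∀ᵐ ω ∂μ, T ω ∈ Set.range tval := by
    set S : Set ℝ := Set.range tval with hS
    have hSm : MeasurableSet S := (Set.finite_range tval).measurableSet
    have h0 : ∫ ω, Sᶜ.indicator (fun _ => (1 : ℝ)) (T ω) ∂μ = 0 := by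
      rw [hTdist]
      have : ∀ σ : G, Sᶜ.indicator (fun _ => (1 : ℝ)) (tval σ) = 0 := by
        intro σ
        exact Set.indicator_of_notMem (by simp [hS]) _
      simp [this]
    have heq : (fun ω => Sᶜ.indicator (fun _ => (1 : ℝ)) (T ω))
        = (T ⁻¹' Sᶜ).indicator (fun _ => (1 : ℝ)) := by
      ext ω
      by_cases hω : T ω ∈ S <;>
        simp [Set.indicator, hω, Set.mem_preimage]
    rw [heq, integral_indicator_const _ (hT hSm.compl)] at h0
    have hμ : μ (T ⁻¹' Sᶜ) = 0 := by
      have := measure_ne_top μ (T ⁻¹' Sᶜ)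
      have h1 : μ.real (T ⁻¹' Sᶜ) = 0 := by simpa using h0
      exact (measureReal_eq_zero_iff this).mp h1
    rw [ae_iff]
    convert hμ using 2
    rfl
  -- any function of T is integrable
  have hGint : ∀ g : ℝ → ℝ, Measurable g → Integrable (fun ω => g (T ω)) μ := by
    intro g hg
    refine Integrable.mono' (integrable_const (∑ σ : G, |g (tval σ)|))
      ((hg.comp hT).aestronglyMeasurable) ?_
    filter_upwards [hTmem] with ω hω
    obtain ⟨σ, hσ⟩ := hω
    rw [Real.norm_eq_abs, ← hσ]
    exact Finset.single_le_sum (f := fun τ => |g (tval τ)|)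
      (fun _ _ => abs_nonneg _) (mem_univ σ)
  -- card ≠ 0
  have hcard : (Fintype.card G : ℝ) ≠ 0 := by
    intro h
    have h1 := hTdist (fun _ => 1)
    simp [h] at h1
  -- the polynomial in T
  set g : ℕ → ℝ → ℝ := fun i t => t ^ n * (t - 2) ^ (n - i) with hg
  have hgmeas : ∀ i, Measurable (g i) := by
    intro i
    exact (measurable_id.pow_const n).mul ((measurable_id.sub_const 2).pow_const (n - i))
  -- pointwise binomial expansion
  have hpt : ∀ ω, (T ω * ((X ω) ^ 2 - 2 + T ω)) ^ n
      = ∑ i ∈ Finset.range (n + 1),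
          (n.choose i : ℝ) * (X ω ^ (2 * i) * g i (T ω)) := by
    intro ω
    have h1 : T ω * ((X ω) ^ 2 - 2 + T ω) = T ω * ((X ω) ^ 2 + (T ω - 2)) := by ring
    rw [h1, mul_pow, add_pow, Finset.mul_sum]
    refine Finset.sum_congr rfl fun i _ => ?_
    rw [pow_mul]
    simp only [hg]
    ring
  simp only [hpt]
  -- integrability of each summand
  have hint : ∀ i ∈ Finset.range (n + 1),
      Integrable (fun ω => (n.choose i : ℝ) * (X ω ^ (2 * i) * g i (T ω))) μ := by
    intro i _
    refine Integrable.const_mul ?_ _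
    exact (hindep.comp (measurable_id.pow_const (2 * i)) (hgmeas i)).integrable_mul
      (hXint i) (hGint (g i) (hgmeas i))
  rw [integral_finset_sum _ hint, Finset.sum_div]
  refine Finset.sum_congr rfl fun i _ => ?_
  have hmul := (hindep.comp (measurable_id.pow_const (2 * i)) (hgmeas i)).integral_mul_eq_mul_integral
      (hXint i).aestronglyMeasurable (hGint (g i) (hgmeas i)).aestronglyMeasurable
  have hmul2 : ∫ a, X a ^ (2 * i) * g i (T a) ∂μ
      = (∫ x, X x ^ (2 * i) ∂μ) * ∫ x, g i (T x) ∂μ := hmul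
  rw [integral_const_mul, hmul2, hXeven i, hTdist (g i)]
  simp only [hg]
  field_simp
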